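/- Let ε ∈ (0,1), δ ∈ (0,1), s > 0, and set q_j := min{1-ε, s δ^j} for j ≥ 0. Let G_0, ..., G_{J-1} be independent with G_j ~ Geom(1 - q_j) (failures before success), and let G be any random variable stochastically dominated by Σ_{j<J} G_j. Then there exist constants A, α > 0 (independent of J and r) such that Pr[G > r] ≤ A e^{-α r} for every positive integer r. -/

import Mathlib

open MeasureTheory ProbabilityTheory

lemma tail_aux {Ω : Type} [MeasurableSpace Ω] (μ : Measure Ω) [IsProbabilityMeasure μ]
    {J : ℕ} (Gs : Fin J → Ω → ℕ) (hmeas : ∀ j, Measurable (Gs j))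
    (q : Fin J → ℝ) (hq0 : ∀ j, 0 ≤ q j) (θ : ℝ) (hθ0 : 0 < θ) (hθ1 : θ < 1)
    (hqθ : ∀ j, q j < θ)
    (hd : ∀ j k, μ {ω | Gs j ω = k} = ENNReal.ofReal ((1 - q j) * q j ^ k))
    (hind : iIndepFun Gs μ)
    (T : Finset (Fin J)) :
    ∀ x : ℕ, μ {ω | x ≤ ∑ j ∈ T, Gs j ω} ≤
      ENNReal.ofReal ((∏ j ∈ T, (1 - q j / θ)⁻¹) * θ ^ x) := by
  have hprodnn : ∀ (s : Finset (Fin J)), 0 ≤ ∏ j ∈ s, (1 - q j / θ)⁻¹ := by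
    intro s
    apply Finset.prod_nonneg
    intro j _
    have h : q j / θ < 1 := (div_lt_one hθ0).2 (hqθ j)
    exact inv_nonneg.2 (by linarith)
  induction T using Finset.induction_on with
  | empty =>
      intro x
      cases x with
      | zero => simp
      | succ n =>
          have h : {ω : Ω | n + 1 ≤ ∑ j ∈ (∅ : Finset (Fin J)), Gs j ω} = ∅ := by
            ext ω; simp
          rw [h]
          simp
  | @insert i T hi ih =>
      intro x
      set S : Ω → ℕ := fun ω => ∑ j ∈ T, Gs j ω with hSdef
      have hSmeas : Measurable S := Finset.measurable_sum _ (fun j _ => hmeas j)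
      have hindep : IndepFun (Gs i) S μ := by
        have h := (hind.indepFun_finsetSum_of_notMem hmeas hi).symm
        have heq : (∑ j ∈ T, Gs j) = S := by
          funext ω; simp [hSdef, Finset.sum_apply]
        rwa [heq] at h
      have hset : {ω | x ≤ ∑ j ∈ insert i T, Gs j ω}
          = ⋃ k : ℕ, (Gs i ⁻¹' {k} ∩ S ⁻¹' Set.Ici (x - k)) := by
        ext ω
        simp only [Set.mem_setOf_eq, Set.mem_iUnion, Set.mem_inter_iff, Set.mem_preimage,
          Set.mem_singleton_iff, Set.mem_Ici, Finset.sum_insert hi, hSdef]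
        constructor
        · intro h; exact ⟨Gs i ω, rfl, by omega⟩
        · rintro ⟨k, hk, h2⟩; omega
      have hmeask : ∀ k : ℕ, MeasurableSet (Gs i ⁻¹' {k} ∩ S ⁻¹' Set.Ici (x - k)) :=
        fun k => ((hmeas i) (by trivial)).inter (hSmeas (by trivial))
      have hdisj : Pairwise (Function.onFun Disjoint
          fun k : ℕ => Gs i ⁻¹' {k} ∩ S ⁻¹' Set.Ici (x - k)) := by
        intro a b hab
        simp only [Function.onFun]
        apply Set.disjoint_left.2
        rintro ω ⟨h1, _⟩ ⟨h2, _⟩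
        exact hab ((Set.mem_singleton_iff.1 h1).symm.trans (Set.mem_singleton_iff.1 h2))
      rw [hset, measure_iUnion hdisj hmeask]
      set P : ℝ := ∏ j ∈ T, (1 - q j / θ)⁻¹ with hP
      have hPnn : 0 ≤ P := hprodnn T
      have hqθi : q i / θ < 1 := (div_lt_one hθ0).2 (hqθ i)
      have hqθi0 : 0 ≤ q i / θ := div_nonneg (hq0 i) hθ0.le
      have hterm : ∀ k : ℕ, μ (Gs i ⁻¹' {k} ∩ S ⁻¹' Set.Ici (x - k))
          ≤ ENNReal.ofReal (((1 - q i) * (P * θ ^ x)) * (q i / θ) ^ k) := by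
        intro k
        rw [hindep.measure_inter_preimage_eq_mul _ _ (by trivial) (by trivial)]
        have h1 : μ (Gs i ⁻¹' {k}) = ENNReal.ofReal ((1 - q i) * q i ^ k) := by
          have : Gs i ⁻¹' {k} = {ω | Gs i ω = k} := rfl
          rw [this, hd i k]
        have h2 : μ (S ⁻¹' Set.Ici (x - k)) ≤ ENNReal.ofReal (P * θ ^ (x - k)) := by
          have : S ⁻¹' Set.Ici (x - k) = {ω | x - k ≤ ∑ j ∈ T, Gs j ω} := rfl
          rw [this]
          exact ih (x - k)
        calc μ (Gs i ⁻¹' {k}) * μ (S ⁻¹' Set.Ici (x - k))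
            ≤ ENNReal.ofReal ((1 - q i) * q i ^ k) * ENNReal.ofReal (P * θ ^ (x - k)) := by
              rw [h1]; exact mul_le_mul_right h2 _
          _ = ENNReal.ofReal (((1 - q i) * q i ^ k) * (P * θ ^ (x - k))) := by
              have h1q : 0 ≤ 1 - q i := by linarith [hqθ i, hθ1]
              rw [ENNReal.ofReal_mul (mul_nonneg h1q (pow_nonneg (hq0 i) k))]
          _ ≤ ENNReal.ofReal (((1 - q i) * (P * θ ^ x)) * (q i / θ) ^ k) := by
              apply ENNReal.ofReal_le_ofReal
              have h1q : 0 ≤ 1 - q i := by linarith [hqθ i, hθ1]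
              have hpow : q i ^ k * θ ^ (x - k) ≤ (q i / θ) ^ k * θ ^ x := by
                have hθk : (0:ℝ) < θ ^ k := pow_pos hθ0 k
                have key : θ ^ (x - k) * θ ^ k ≤ θ ^ x := by
                  rw [← pow_add]
                  exact pow_le_pow_of_le_one hθ0.le hθ1.le (by omega)
                have : θ ^ (x - k) ≤ θ ^ x / θ ^ k := (le_div_iff₀ hθk).2 key
                calc q i ^ k * θ ^ (x - k) ≤ q i ^ k * (θ ^ x / θ ^ k) := by
                      apply mul_le_mul_of_nonneg_left this (pow_nonneg (hq0 i) k)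
                  _ = (q i / θ) ^ k * θ ^ x := by
                      rw [div_pow]; field_simp
              calc (1 - q i) * q i ^ k * (P * θ ^ (x - k))
                  = (1 - q i) * P * (q i ^ k * θ ^ (x - k)) := by ring
                _ ≤ (1 - q i) * P * ((q i / θ) ^ k * θ ^ x) := by
                    apply mul_le_mul_of_nonneg_left hpow (by positivity)
                _ = (1 - q i) * (P * θ ^ x) * (q i / θ) ^ k := by ring
      have hsummable : Summable (fun k : ℕ => ((1 - q i) * (P * θ ^ x)) * (q i / θ) ^ k) :=
        (summable_geometric_of_lt_one hqθi0 hqθi).mul_left _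
      have hnn : ∀ k : ℕ, 0 ≤ ((1 - q i) * (P * θ ^ x)) * (q i / θ) ^ k := by
        intro k
        have h1q : 0 ≤ 1 - q i := by linarith [hqθ i, hθ1]
        positivity
      calc (∑' k, μ (Gs i ⁻¹' {k} ∩ S ⁻¹' Set.Ici (x - k)))
          ≤ ∑' k, ENNReal.ofReal (((1 - q i) * (P * θ ^ x)) * (q i / θ) ^ k) :=
            ENNReal.tsum_le_tsum hterm
        _ = ENNReal.ofReal (∑' k, ((1 - q i) * (P * θ ^ x)) * (q i / θ) ^ k) :=
            (ENNReal.ofReal_tsum_of_nonneg hnn hsummable).symm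
        _ ≤ ENNReal.ofReal ((∏ j ∈ insert i T, (1 - q j / θ)⁻¹) * θ ^ x) := by
            apply ENNReal.ofReal_le_ofReal
            rw [tsum_mul_left, tsum_geometric_of_lt_one hqθi0 hqθi,
              Finset.prod_insert hi]
            have h1q : 0 ≤ 1 - q i := by linarith [hqθ i, hθ1]
            have hinv : (0:ℝ) ≤ (1 - q i / θ)⁻¹ := by
              have : (0:ℝ) < 1 - q i / θ := by linarith
              positivity
            calc (1 - q i) * (P * θ ^ x) * (1 - q i / θ)⁻¹
                ≤ 1 * (P * θ ^ x) * (1 - q i / θ)⁻¹ := by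
                  apply mul_le_mul_of_nonneg_right _ hinv
                  apply mul_le_mul_of_nonneg_right _ (by positivity)
                  linarith [hq0 i]
              _ = (1 - q i / θ)⁻¹ * P * θ ^ x := by ring

theorem tail_bound_dominated_sum_geometric (ε δ s : ℝ)
    (hε : ε ∈ Set.Ioo (0 : ℝ) 1) (hδ : δ ∈ Set.Ioo (0 : ℝ) 1) (hs : 0 < s) :
    ∃ A α : ℝ, 0 < A ∧ 0 < α ∧
      ∀ (J : ℕ) (Ω : Type) (_ : MeasurableSpace Ω) (μ : Measure Ω),
        IsProbabilityMeasure μ →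
        ∀ (Gs : Fin J → Ω → ℕ) (G : Ω → ℕ),
          (∀ j, Measurable (Gs j)) → Measurable G →
          (∀ (j : Fin J) (k : ℕ), μ {ω | Gs j ω = k} =
            ENNReal.ofReal ((1 - min (1 - ε) (s * δ ^ (j : ℕ))) *
              (min (1 - ε) (s * δ ^ (j : ℕ))) ^ k)) →
          iIndepFun Gs μ →
          (∀ x : ℕ, μ {ω | x ≤ G ω} ≤ μ {ω | x ≤ ∑ j, Gs j ω}) →
          ∀ r : ℕ, 0 < r → μ {ω | r < G ω} ≤ ENNReal.ofReal (A * Real.exp (-α * r)) := by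
  obtain ⟨hε0, hε1⟩ := hε
  obtain ⟨hδ0, hδ1⟩ := hδ
  set θ : ℝ := 1 - ε / 2 with hθdef
  have hθ0 : 0 < θ := by simp only [hθdef]; linarith
  have hθ1 : θ < 1 := by simp only [hθdef]; linarith
  set K : ℝ := 2 * s / (ε * (1 - δ)) with hKdef
  refine ⟨Real.exp K, -Real.log θ, Real.exp_pos _, ?_, ?_⟩
  · have : Real.log θ < 0 := Real.log_neg hθ0 hθ1
    linarith
  intro J Ω mΩ μ hμ Gs G hGs hG hdist hind hdom r _hr
  set q : Fin J → ℝ := fun j => min (1 - ε) (s * δ ^ (j : ℕ)) with hqdef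
  have hq0 : ∀ j, 0 ≤ q j := by
    intro j
    apply le_min (by linarith)
    positivity
  have hqε : ∀ j, q j ≤ 1 - ε := fun j => min_le_left _ _
  have hqδ : ∀ j, q j ≤ s * δ ^ (j : ℕ) := fun j => min_le_right _ _
  have hqθ : ∀ j, q j < θ := by
    intro j
    calc q j ≤ 1 - ε := hqε j
      _ < θ := by simp only [hθdef]; linarith
  have key := tail_aux μ Gs hGs q hq0 θ hθ0 hθ1 hqθ hdist hind Finset.univ (r + 1)
  -- bound the product
  have hprod : (∏ j : Fin J, (1 - q j / θ)⁻¹) ≤ Real.exp K := by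
    have hfac : ∀ j : Fin J, (1 - q j / θ)⁻¹ ≤ Real.exp (2 * (s * δ ^ (j : ℕ)) / ε) := by
      intro j
      have hu0 : 0 ≤ q j / θ := div_nonneg (hq0 j) hθ0.le
      have hu1 : q j / θ < 1 := (div_lt_one hθ0).2 (hqθ j)
      have hden : 0 < 1 - q j / θ := by linarith
      have hθq : (0:ℝ) < θ - q j := by linarith [hqθ j]
      have e1 : 1 - q j / θ = (θ - q j) / θ := by field_simp
      have e2 : (1 - q j / θ)⁻¹ = 1 + q j / (θ - q j) := by
        rw [e1, inv_div]
        field_simp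
        ring
      have hεhalf : ε / 2 ≤ θ - q j := by
        have := hqε j
        simp only [hθdef]
        linarith
      have h2 : q j / (θ - q j) ≤ 2 * (s * δ ^ (j : ℕ)) / ε := by
        calc q j / (θ - q j) ≤ q j / (ε / 2) :=
              div_le_div_of_nonneg_left (hq0 j) (by linarith) hεhalf
          _ = 2 * q j / ε := by rw [div_div_eq_mul_div]; ring_nf
          _ ≤ 2 * (s * δ ^ (j : ℕ)) / ε := by
              apply (div_le_div_iff_of_pos_right hε0).2
              have := hqδ j
              linarith
      calc (1 - q j / θ)⁻¹ = 1 + q j / (θ - q j) := e2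
        _ = q j / (θ - q j) + 1 := by ring
        _ ≤ Real.exp (q j / (θ - q j)) := Real.add_one_le_exp _
        _ ≤ Real.exp (2 * (s * δ ^ (j : ℕ)) / ε) := Real.exp_le_exp.2 h2
    calc (∏ j : Fin J, (1 - q j / θ)⁻¹)
        ≤ ∏ j : Fin J, Real.exp (2 * (s * δ ^ (j : ℕ)) / ε) := by
          apply Finset.prod_le_prod
          · intro j _
            have hu1 : q j / θ < 1 := (div_lt_one hθ0).2 (hqθ j)
            exact inv_nonneg.2 (by linarith)
          · exact fun j _ => hfac j
      _ = Real.exp (∑ j : Fin J, 2 * (s * δ ^ (j : ℕ)) / ε) := (Real.exp_sum _ _).symm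
      _ ≤ Real.exp K := by
          apply Real.exp_le_exp.2
          have hsum : (∑ j : Fin J, 2 * (s * δ ^ (j : ℕ)) / ε)
              = (2 * s / ε) * ∑ j ∈ Finset.range J, δ ^ j := by
            rw [Finset.mul_sum, Fin.sum_univ_eq_sum_range (fun j => 2 * (s * δ ^ j) / ε)]
            apply Finset.sum_congr rfl
            intro j _
            field_simp
          rw [hsum, hKdef]
          have hgeom : (∑ j ∈ Finset.range J, δ ^ j) ≤ 1 / (1 - δ) := by
            rw [geom_sum_eq (ne_of_lt hδ1) J]
            have e3 : (δ ^ J - 1) / (δ - 1) = (1 - δ ^ J) / (1 - δ) := by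
              rw [← neg_div_neg_eq]; ring_nf
            rw [e3]
            apply (div_le_div_iff_of_pos_right (by linarith)).2
            have : 0 ≤ δ ^ J := pow_nonneg hδ0.le J
            linarith
          calc (2 * s / ε) * ∑ j ∈ Finset.range J, δ ^ j
              ≤ (2 * s / ε) * (1 / (1 - δ)) := by
                apply mul_le_mul_of_nonneg_left hgeom (by positivity)
            _ = 2 * s / (ε * (1 - δ)) := by field_simp
  -- conclude
  have hstep : μ {ω | r < G ω} ≤ μ {ω | r + 1 ≤ ∑ j, Gs j ω} := hdom (r + 1)
  have hexp : Real.exp (-(-Real.log θ) * (r : ℝ)) = θ ^ r := by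
    rw [neg_neg, mul_comm, Real.exp_nat_mul, Real.exp_log hθ0]
  calc μ {ω | r < G ω} ≤ μ {ω | r + 1 ≤ ∑ j, Gs j ω} := hstep
    _ ≤ ENNReal.ofReal ((∏ j : Fin J, (1 - q j / θ)⁻¹) * θ ^ (r + 1)) := key
    _ ≤ ENNReal.ofReal (Real.exp K * Real.exp (-(-Real.log θ) * (r : ℝ))) := by
        apply ENNReal.ofReal_le_ofReal
        rw [hexp]
        have hθr : (0:ℝ) ≤ θ ^ r := pow_nonneg hθ0.le r
        have hθr1 : θ ^ (r + 1) ≤ θ ^ r :=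
          pow_le_pow_of_le_one hθ0.le hθ1.le (by omega)
        have hPnn : 0 ≤ ∏ j : Fin J, (1 - q j / θ)⁻¹ := by
          apply Finset.prod_nonneg
          intro j _
          have hu1 : q j / θ < 1 := (div_lt_one hθ0).2 (hqθ j)
          exact inv_nonneg.2 (by linarith)
        calc (∏ j : Fin J, (1 - q j / θ)⁻¹) * θ ^ (r + 1)
            ≤ Real.exp K * θ ^ (r + 1) := by
              apply mul_le_mul_of_nonneg_right hprod (pow_nonneg hθ0.le _)
          _ ≤ Real.exp K * θ ^ r := by
              apply mul_le_mul_of_nonneg_left hθr1 (Real.exp_pos _).le
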